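/- Let q be a self-join-free Boolean conjunctive query containing atoms F and G (F ≠ G) such that F attacks G and G attacks F in the attack graph. For constants a, b define a valuation β_{a,b} on the variables of q by: β_{a,b}(u) = ⊥ if u ∈ F⁺ ∩ G⁺; β_{a,b}(u) = a if u ∈ F⁺ \ G⁺; β_{a,b}(u) = b if u ∈ G⁺ \ F⁺; β_{a,b}(u) = (a,b) otherwise. Then for every atom H ∈ q with H ∉ {F, G} and any constants a, b, a', b': if β_{a,b} and β_{a',b'} agree on key(H), then β_{a,b}(H) = β_{a',b'}(H). -/

import Mathlib

/-- Constants: base constants, a special constant `⊥`, and injective pairing/tripling. -/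
inductive C where
  | base : ℕ → C
  | bot : C
  | pair : C → C → C
  | triple : C → C → C → C
deriving DecidableEq

/-- A fact: relation name, primary-key values, non-key values. -/
structure DBFact where
  rel : ℕ
  key : List C
  rest : List C
deriving DecidableEq

/-- Two facts are key-equal if they have the same relation name and primary-key value. -/
def keyEq (A B : DBFact) : Prop := A.rel = B.rel ∧ A.key = B.key

/-- A term is a variable (inl) or a constant (inr). -/
abbrev Term := ℕ ⊕ C

/-- An atom with key positions and non-key positions. -/
structure Atom where
  rel : ℕ
  key : List Term
  rest : List Term
deriving DecidableEq

def termVars (l : List Term) : Finset ℕ := (l.filterMap fun t => t.getLeft?).toFinset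

/-- Variables at primary-key positions of an atom. -/
def keyVars (F : Atom) : Finset ℕ := termVars F.key

/-- All variables of an atom. -/
def atomVars (F : Atom) : Finset ℕ := termVars F.key ∪ termVars F.rest

/-- A query is self-join-free: no relation name occurs twice. -/
def SJF (q : Finset Atom) : Prop := ∀ F ∈ q, ∀ G ∈ q, F.rel = G.rel → F = G

/-- Apply a valuation to an atom, yielding a fact. -/
def applyVal (θ : ℕ → C) (F : Atom) : DBFact :=
  ⟨F.rel, F.key.map (Sum.elim θ id), F.rest.map (Sum.elim θ id)⟩

/-- Semantic implication of a functional dependency `X → Y` by a set of FDs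
(two-tuple semantics). -/
def FDImplies (fds : Set (Set ℕ × Set ℕ)) (X Y : Set ℕ) : Prop :=
  ∀ θ μ : ℕ → C,
    (∀ p ∈ fds, (∀ v ∈ p.1, θ v = μ v) → ∀ v ∈ p.2, θ v = μ v) →
    (∀ v ∈ X, θ v = μ v) → ∀ v ∈ Y, θ v = μ v

/-- `FD(q) = { key(F) → vars(F) : F ∈ q }`. -/
def FDs (q : Finset Atom) : Set (Set ℕ × Set ℕ) :=
  {p | ∃ F ∈ q, p = ((keyVars F : Set ℕ), (atomVars F : Set ℕ))}

/-- `F⁺ = { x : FD(q \ {F}) ⊨ key(F) → x }`. -/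
def plus (q : Finset Atom) (F : Atom) : Set ℕ :=
  {x | FDImplies (FDs (q.erase F)) (keyVars F : Set ℕ) {x}}

/-- One step of a witness for an attack by `F`. -/
def AttackStep (q : Finset Atom) (F : Atom) (A B : Atom) : Prop :=
  ¬ ((atomVars A ∩ atomVars B : Finset ℕ) : Set ℕ) ⊆ plus q F

/-- `F` attacks `G` in the attack graph of `q`. -/
def Attacks (q : Finset Atom) (F G : Atom) : Prop :=
  F ≠ G ∧ F ∈ q ∧ ∃ L : List Atom, (∀ A ∈ L, A ∈ q) ∧
    List.Chain (AttackStep q F) F L ∧ (F :: L).getLast (List.cons_ne_nil F L) = G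

open Classical in
/-- The valuation `β_{a,b}`: `⊥` on `F⁺ ∩ G⁺`, `a` on `F⁺ \ G⁺`, `b` on `G⁺ \ F⁺`,
and the pair `(a,b)` elsewhere. -/
noncomputable def bval (q : Finset Atom) (F G : Atom) (a b : ℕ) (u : ℕ) : C :=
  if u ∈ plus q F ∩ plus q G then C.bot
  else if u ∈ plus q F then C.base a
  else if u ∈ plus q G then C.base b
  else C.pair (C.base a) (C.base b)

lemma plus_closure (q : Finset Atom) (F H : Atom) (hH : H ∈ q.erase F)
    (hk : (keyVars H : Set ℕ) ⊆ plus q F) : (atomVars H : Set ℕ) ⊆ plus q F := by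
  intro x hx θ μ hcl hkey v hv
  rw [Set.mem_singleton_iff] at hv; subst hv
  have hag : ∀ w ∈ ((keyVars H : Finset ℕ) : Set ℕ), θ w = μ w := by
    intro w hw
    exact hk hw θ μ hcl hkey w rfl
  exact hcl ((keyVars H : Set ℕ), (atomVars H : Set ℕ)) ⟨H, hH, rfl⟩ hag v hx

lemma applyVal_congr (θ θ' : ℕ → C) (H : Atom)
    (h : ∀ v ∈ atomVars H, θ v = θ' v) : applyVal θ H = applyVal θ' H := by
  have hterm : ∀ (l : List Term), (∀ v ∈ termVars l, θ v = θ' v) →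
      l.map (Sum.elim θ id) = l.map (Sum.elim θ' id) := by
    intro l hl
    apply List.map_congr_left
    intro t ht
    cases t with
    | inl v =>
      apply hl
      simp only [termVars, List.mem_toFinset, List.mem_filterMap]
      exact ⟨Sum.inl v, ht, rfl⟩
    | inr c => rfl
  unfold applyVal
  have hk : ∀ v ∈ termVars H.key, θ v = θ' v := by
    intro v hv; exact h v (Finset.mem_union_left _ hv)
  have hr : ∀ v ∈ termVars H.rest, θ v = θ' v := by
    intro v hv; exact h v (Finset.mem_union_right _ hv)
  rw [hterm H.key hk, hterm H.rest hr]

/-- If `F` and `G` attack each other, then for every atom `H ∉ {F, G}`, whenever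
`β_{a,b}` and `β_{a',b'}` agree on `key(H)`, they produce the same fact from `H`. -/
theorem bval_consistent_outside (q : Finset Atom) (hq : SJF q) (F G : Atom)
    (hFG : F ≠ G) (h1 : Attacks q F G) (h2 : Attacks q G F) :
    ∀ H ∈ q, H ≠ F → H ≠ G → ∀ a b a' b' : ℕ,
      (∀ v ∈ keyVars H, bval q F G a b v = bval q F G a' b' v) →
      applyVal (bval q F G a b) H = applyVal (bval q F G a' b') H := by

  intro H hHq hHF hHG a b a' b' hkey
  set P := plus q F with hP
  set Q := plus q G with hQ
  have hHeF : H ∈ q.erase F := Finset.mem_erase.mpr ⟨hHF, hHq⟩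
  have hHeG : H ∈ q.erase G := Finset.mem_erase.mpr ⟨hHG, hHq⟩
  by_cases hPk : (keyVars H : Set ℕ) ⊆ P
  · by_cases hQk : (keyVars H : Set ℕ) ⊆ Q
    · -- all atom vars in P ∩ Q, value ⊥
      have hPa := plus_closure q F H hHeF hPk
      have hQa := plus_closure q G H hHeG hQk
      apply applyVal_congr
      intro v hv
      have h1 : v ∈ P := hPa hv
      have h2 : v ∈ Q := hQa hv
      simp [bval, ← hP, ← hQ, h1, h2]
    · -- some key var in P \ Q forces a = a'; atom vars ⊆ P
      obtain ⟨v, hvk, hvQ⟩ := Set.not_subset.mp hQk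
      have hvP : v ∈ P := hPk hvk
      have := hkey v hvk
      simp [bval, ← hP, ← hQ, hvP, hvQ] at this
      subst this
      have hPa := plus_closure q F H hHeF hPk
      apply applyVal_congr
      intro w hw
      have hwP : w ∈ P := hPa hw
      by_cases hwQ : w ∈ Q <;> simp [bval, ← hP, ← hQ, hwP, hwQ]
  · by_cases hQk : (keyVars H : Set ℕ) ⊆ Q
    · obtain ⟨v, hvk, hvP⟩ := Set.not_subset.mp hPk
      have hvQ : v ∈ Q := hQk hvk
      have := hkey v hvk
      simp [bval, ← hP, ← hQ, hvP, hvQ] at this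
      subst this
      have hQa := plus_closure q G H hHeG hQk
      apply applyVal_congr
      intro w hw
      have hwQ : w ∈ Q := hQa hw
      by_cases hwP : w ∈ P <;> simp [bval, ← hP, ← hQ, hwP, hwQ]
    · -- derive a = a' and b = b'
      obtain ⟨v, hvk, hvP⟩ := Set.not_subset.mp hPk
      obtain ⟨w, hwk, hwQ⟩ := Set.not_subset.mp hQk
      have hab : a = a' ∧ b = b' := by
        by_cases hvQ : v ∈ Q
        · have h1 := hkey v hvk
          simp [bval, ← hP, ← hQ, hvP, hvQ] at h1
          by_cases hwP : w ∈ P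
          · have h2 := hkey w hwk
            simp [bval, ← hP, ← hQ, hwP, hwQ] at h2
            exact ⟨h2, h1⟩
          · have h2 := hkey w hwk
            simp [bval, ← hP, ← hQ, hwP, hwQ] at h2
            exact ⟨h2.1, h1⟩
        · have h1 := hkey v hvk
          simp [bval, ← hP, ← hQ, hvP, hvQ] at h1
          exact h1
      obtain ⟨ha, hb⟩ := hab
      subst ha; subst hb
      rfl
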